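/- Let t ∈ ℂ with f(t) = 0. Then every complex root of the cubic polynomial s³ − t·s² + conj(t)·s − 1 has modulus 1, and the polynomial has a root of multiplicity at least 2. -/

import Mathlib

/-- The function `f(t) = |t|⁴ − 8 Re(t³) + 18 |t|² − 27`. -/
noncomputable def fdisc (t : ℂ) : ℝ :=
  ‖t‖ ^ 4 - 8 * (t ^ 3).re + 18 * ‖t‖ ^ 2 - 27

open Polynomial

/-- The characteristic cubic `s³ − t·s² + conj(t)·s − 1`. -/
noncomputable def cubic (t : ℂ) : Polynomial ℂ :=
  X ^ 3 - C t * X ^ 2 + C ((starRingEnd ℂ) t) * X - 1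

lemma cubic_monic (t : ℂ) : (cubic t).Monic := by unfold cubic; monicity!

lemma cubic_deg (t : ℂ) : (cubic t).natDegree = 3 := by unfold cubic; compute_degree!

lemma double_mod (t u v : ℂ) (h1 : u + u + v = t)
    (h2 : u*u + u*v + u*v = (starRingEnd ℂ) t) (h3 : u*u*v = 1) :
    ‖u‖ = 1 ∧ ‖v‖ = 1 := by
  have hu : u ≠ 0 := by rintro rfl; simp at h3
  have h1c : (starRingEnd ℂ) u + (starRingEnd ℂ) u + (starRingEnd ℂ) v = (starRingEnd ℂ) t := by
    rw [← map_add, ← map_add, h1]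
  have h3c : (starRingEnd ℂ) u * (starRingEnd ℂ) u * (starRingEnd ℂ) v = 1 := by
    rw [← map_mul, ← map_mul, h3, map_one]
  set uc := (starRingEnd ℂ) u with huc
  set vc := (starRingEnd ℂ) v with hvc
  have eq1 : u*u + u*v + u*v = uc + uc + vc := by rw [h2, ← h1c]
  have key : (u * uc - 1) * (u * (u * uc + 1) - 2 * uc^2) = 0 := by
    linear_combination (u * uc^2) * eq1 - 2 * uc^2 * h3 + u * h3c
  have humod : u * uc = 1 := by
    rcases mul_eq_zero.mp key with h | h
    · exact sub_eq_zero.mp h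
    · have habs : ‖u‖ * ‖(u * uc + 1)‖ = 2 * ‖u‖ ^ 2 := by
        have := congrArg (‖·‖) (sub_eq_zero.mp h)
        simpa [map_mul, norm_mul, huc, Complex.norm_conj, sq, mul_assoc] using this
      have hn : u * uc = ((‖u‖ ^ 2 : ℝ) : ℂ) := by
        rw [huc, Complex.mul_conj, Complex.sq_norm]
      set R := ‖u‖ with hR
      have hRpos : 0 < R := norm_pos_iff.mpr hu
      have habs2 : R * (R^2 + 1) = 2 * R^2 := by
        rw [hn, show ((R^2 : ℝ) : ℂ) + 1 = ((R^2 + 1 : ℝ) : ℂ) by push_cast; ring,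
          Complex.norm_real, Real.norm_eq_abs, abs_of_pos (by positivity)] at habs
        exact habs
      have hz : R * (R - 1)^2 = 0 := by linear_combination habs2
      have hR1 : R = 1 := by
        rcases mul_eq_zero.mp hz with h' | h'
        · exact absurd h' hRpos.ne'
        · have := pow_eq_zero_iff (n := 2) (by norm_num) |>.mp h'
          linarith [sub_eq_zero.mp this]
      rw [hn, hR1]; norm_num
  have habs_u : ‖u‖ = 1 := by
    have : ‖u‖ ^ 2 = 1 := by
      have := congrArg (‖·‖) humod
      simpa [map_mul, norm_mul, huc, Complex.norm_conj, sq] using this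
    nlinarith [norm_nonneg u]
  refine ⟨habs_u, ?_⟩
  have := congrArg (‖·‖) h3
  simpa [map_mul, norm_mul, habs_u] using this

lemma disc_zero (t a b c : ℂ) (hf : fdisc t = 0) (h1 : a + b + c = t)
    (h2 : a*b + a*c + b*c = (starRingEnd ℂ) t) (h3 : a*b*c = 1) :
    (a - b) * (a - c) * (b - c) = 0 := by
  set tc := (starRingEnd ℂ) t with htc
  have hA : ((‖t‖ ^ 2 : ℝ) : ℂ) = t * tc := by
    rw [htc, Complex.mul_conj, Complex.sq_norm]
  have hRe : (((t^3).re : ℝ) : ℂ) = (t^3 + tc^3) / 2 := by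
    have h := Complex.add_conj (t^3)
    rw [map_pow, ← htc] at h
    push_cast at h
    field_simp
    linear_combination -h
  have hfc : t^2 * tc^2 - 4*tc^3 - 4*t^3 + 18*(t*tc) - 27 = 0 := by
    have h0 : ((fdisc t : ℝ) : ℂ) = 0 := by rw [hf]; norm_num
    unfold fdisc at h0
    push_cast at h0
    rw [show ((‖t‖ : ℝ) : ℂ)^4 = (((‖t‖ ^2 : ℝ)) : ℂ)^2 by push_cast; ring,
        show ((‖t‖ : ℝ) : ℂ)^2 = (((‖t‖ ^2 : ℝ)) : ℂ) by push_cast; ring,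
        hA, hRe] at h0
    linear_combination h0
  have sq0 : ((a - b) * (a - c) * (b - c))^2 = 0 := by
    have expand : ((a - b) * (a - c) * (b - c))^2 =
        (a+b+c)^2 * (a*b+a*c+b*c)^2 - 4*(a*b+a*c+b*c)^3 - 4*(a+b+c)^3*(a*b*c)
          + 18*(a+b+c)*(a*b+a*c+b*c)*(a*b*c) - 27*(a*b*c)^2 := by ring
    rw [expand, h1, h2, h3]
    linear_combination hfc
  exact pow_eq_zero_iff (n := 2) (by norm_num) |>.mp sq0

theorem roots_of_fzero (t : ℂ) (hf : fdisc t = 0) :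
    (∀ z : ℂ, (cubic t).IsRoot z → ‖z‖ = 1) ∧
      ∃ z : ℂ, 2 ≤ (cubic t).rootMultiplicity z := by
  have hm := cubic_monic t
  have hcard : (cubic t).roots.card = 3 := by
    rw [← cubic_deg t]
    exact (splits_iff_card_roots.mp (IsAlgClosed.splits _))
  obtain ⟨a, b, c, hroots⟩ := Multiset.card_eq_three.mp hcard
  -- Vieta
  have heq : cubic t = (X - C a) * ((X - C b) * ((X - C c) * 1)) := by
    conv_lhs => rw [(IsAlgClosed.splits _).eq_prod_roots_of_monic hm]
    rw [hroots]; simp [Multiset.prod_cons]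
  have heq2 : X ^ 3 - C t * X ^ 2 + C ((starRingEnd ℂ) t) * X - C 1
      = X ^ 3 - C (a + b + c) * X ^ 2 + C (a*b + a*c + b*c) * X - C (a*b*c) := by
    have hexp : (X - C a) * ((X - C b) * ((X - C c) * 1))
        = X ^ 3 - C (a + b + c) * X ^ 2 + C (a*b + a*c + b*c) * X - C (a*b*c) := by
      simp only [map_add, map_mul]; ring
    rw [← hexp, ← heq]; unfold cubic; simp
  have e2 := congrArg (fun p => coeff p 2) heq2
  have e1 := congrArg (fun p => coeff p 1) heq2
  have e0 := congrArg (fun p => coeff p 0) heq2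
  simp [coeff_one, ← map_add] at e2 e1 e0
  have h1 : a + b + c = t := by linear_combination e2
  have h2 : a*b + a*c + b*c = (starRingEnd ℂ) t := by linear_combination -e1
  have h3 : a*b*c = 1 := by linear_combination -e0
  have hd := disc_zero t a b c hf h1 h2 h3
  have hroot_mem : ∀ z : ℂ, (cubic t).IsRoot z → z = a ∨ z = b ∨ z = c := by
    intro z hz
    have : z ∈ (cubic t).roots := by
      rw [mem_roots hm.ne_zero]; exact hz
    rw [hroots] at this
    simpa using this
  have hcount : ∀ w : ℂ, (cubic t).rootMultiplicity w = Multiset.count w {a, b, c} := by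
    intro w; rw [← count_roots, hroots]
  rcases mul_eq_zero.mp hd with hd' | hbc
  · rcases mul_eq_zero.mp hd' with hab | hac
    · -- a = b
      have hab' : a = b := sub_eq_zero.mp hab
      subst hab'
      obtain ⟨hu, hv⟩ := double_mod t a c h1 h2 h3
      refine ⟨fun z hz => ?_, ⟨a, ?_⟩⟩
      · rcases hroot_mem z hz with rfl | rfl | rfl <;> assumption
      · rw [hcount a]
        simp [Multiset.insert_eq_cons, Multiset.count_cons]
    · -- a = c
      have hac' : a = c := sub_eq_zero.mp hac
      subst hac'
      obtain ⟨hu, hv⟩ := double_mod t a b (by linear_combination h1)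
        (by linear_combination h2) (by linear_combination h3)
      refine ⟨fun z hz => ?_, ⟨a, ?_⟩⟩
      · rcases hroot_mem z hz with rfl | rfl | rfl <;> assumption
      · rw [hcount a]
        simp [Multiset.insert_eq_cons, Multiset.count_cons]
  · -- b = c
    have hbc' : b = c := sub_eq_zero.mp hbc
    subst hbc'
    obtain ⟨hu, hv⟩ := double_mod t b a (by linear_combination h1)
      (by linear_combination h2) (by linear_combination h3)
    refine ⟨fun z hz => ?_, ⟨b, ?_⟩⟩
    · rcases hroot_mem z hz with rfl | rfl | rfl <;> assumption
    · rw [hcount b]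
      simp [Multiset.insert_eq_cons, Multiset.count_cons]
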